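/- Let w be a synaptic kernel, f and g an activation function and a learning modulation function, and γ ≥ 0. Then for every u_0 ∈ C_b(ℝ^m) there exists a global solution u ∈ C_b(ℝ^m × [0,∞)) of the initial value problem u_t(x,t) = −u(x,t) + ∫_{ℝ^m} w(x,y)[1 + γ g(u(x,t) − u(y,t))] f(u(y,t)) dy, u(x,0) = u_0(x), defined for all t ∈ [0,∞). -/

import Mathlib

open MeasureTheory Set

set_option maxHeartbeats 1000000

/-- Global existence: for every `u₀ ∈ C_b(ℝ^m)` there is a bounded
continuous global solution `u ∈ C_b(ℝ^m × [0,∞))` of the plastic neural field IVP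
`uₜ(x,t) = -u(x,t) + ∫ w x y (1 + γ g(u x t - u y t)) f(u y t) dy`, `u(x,0) = u₀(x)`. -/
theorem stmt_7 {m : ℕ} (hm : 1 ≤ m)
    (w : (Fin m → ℝ) → (Fin m → ℝ) → ℝ)
    (Cinf Cw Kw : ℝ) (hCw : 0 < Cw) (hKw : 0 < Kw)
    (hw_meas : Measurable (Function.uncurry w))
    (hw_bdd : ∀ x y, |w x y| ≤ Cinf)
    (hw_int : ∀ x, Integrable fun y => w x y)
    (hw_L1 : ∀ x, (∫ y, |w x y|) ≤ Cw)
    (hw_lip : ∀ x x', (∫ y, |w x y - w x' y|) ≤ Kw * ‖x - x'‖)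
    (f g : ℝ → ℝ)
    (hf_smooth : ContDiff ℝ 1 f) (hf_deriv : ∃ B, ∀ s, |deriv f s| ≤ B)
    (hf_range : ∀ s, 0 ≤ f s ∧ f s ≤ 1)
    (hg_smooth : ContDiff ℝ 1 g) (hg_deriv : ∃ B, ∀ s, |deriv g s| ≤ B)
    (hg_range : ∀ s, 0 ≤ g s ∧ g s ≤ 1)
    (γ : ℝ) (hγ : 0 ≤ γ)
    (u₀ : BoundedContinuousFunction (Fin m → ℝ) ℝ) :
    ∃ u : (Fin m → ℝ) → ℝ → ℝ,
      ContinuousOn (fun p : (Fin m → ℝ) × ℝ => u p.1 p.2) (univ ×ˢ Ici 0) ∧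
      (∃ M, ∀ (x : Fin m → ℝ), ∀ t ∈ Ici (0:ℝ), |u x t| ≤ M) ∧
      (∀ x, u x 0 = u₀ x) ∧
      (∀ (x : Fin m → ℝ), ∀ t ∈ Ici (0:ℝ),
        HasDerivWithinAt (u x)
          (-(u x t) + ∫ y, w x y * (1 + γ * g (u x t - u y t)) * f (u y t))
          (Ici 0) t) := by
  classical
  obtain ⟨Bf, hBf⟩ := hf_deriv
  obtain ⟨Bg, hBg⟩ := hg_deriv
  have hBf0 : 0 ≤ Bf := le_trans (abs_nonneg _) (hBf 0)
  have hBg0 : 0 ≤ Bg := le_trans (abs_nonneg _) (hBg 0)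
  -- Lipschitz estimates for f and g
  have hfL : ∀ a b : ℝ, |f a - f b| ≤ Bf * |a - b| := by
    intro a b
    have := Convex.norm_image_sub_le_of_norm_deriv_le (s := (univ : Set ℝ))
      (fun x _ => (hf_smooth.differentiable one_ne_zero).differentiableAt)
      (fun x _ => hBf x) convex_univ (mem_univ b) (mem_univ a)
    simpa [Real.norm_eq_abs] using this
  have hgL : ∀ a b : ℝ, |g a - g b| ≤ Bg * |a - b| := by
    intro a b
    have := Convex.norm_image_sub_le_of_norm_deriv_le (s := (univ : Set ℝ))
      (fun x _ => (hg_smooth.differentiable one_ne_zero).differentiableAt)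
      (fun x _ => hBg x) convex_univ (mem_univ b) (mem_univ a)
    simpa [Real.norm_eq_abs] using this
  have hfc : Continuous f := hf_smooth.continuous
  have hgc : Continuous g := hg_smooth.continuous
  -- constants
  set A : ℝ := Cw * (1 + γ) with hA
  have hA0 : 0 < A := by positivity
  set LΦ : ℝ := Cw * ((1 + γ) * Bf + 2 * γ * Bg) with hLΦ
  have hLΦ0 : 0 ≤ LΦ := by positivity
  set R₀ : ℝ := ‖u₀‖ + 2 * A + 1 with hR₀
  have hR₀0 : 0 < R₀ := by positivity
  have h2A : 2 * A ≤ R₀ := by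
    have : (0:ℝ) ≤ ‖u₀‖ := norm_nonneg _
    linarith
  set CC : ℝ := R₀ + 1 + A with hCC
  have hCC0 : 0 < CC := by positivity
  set h : ℝ := min (Real.log 2) (1 / CC) with hh
  have hlog2 : 0 < Real.log 2 := Real.log_pos (by norm_num)
  have hhpos : 0 < h := lt_min hlog2 (by positivity)
  have hhlog : h ≤ Real.log 2 := min_le_left _ _
  have hhC : CC * h ≤ 1 := by
    have : h ≤ 1 / CC := min_le_right _ _
    calc CC * h ≤ CC * (1 / CC) := by nlinarith
    _ = 1 := by field_simp
  have hh1 : h ≤ 1 := by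
    have : Real.log 2 ≤ 1 := by
      have := Real.log_le_sub_one_of_pos (by norm_num : (0:ℝ) < 2)
      linarith
    linarith
  set M : ℝ := R₀ + 2 * A with hM
  -- generic integral estimates
  have hWb : ∀ (W : (Fin m → ℝ) → ℝ), Integrable W →
      ∀ (b : (Fin m → ℝ) → ℝ), Continuous b → ∀ c : ℝ, 0 ≤ c → (∀ y, |b y| ≤ c) →
      Integrable (fun y => W y * b y) ∧ |∫ y, W y * b y| ≤ (∫ y, |W y|) * c := by
    intro W hW b hb c hc hbc
    have hmeas : AEStronglyMeasurable (fun y => W y * b y) volume :=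
      hW.aestronglyMeasurable.mul hb.aestronglyMeasurable
    have hint : Integrable (fun y => W y * b y) := by
      refine (hW.abs.mul_const c).mono' hmeas ?_
      filter_upwards with y
      rw [Real.norm_eq_abs, abs_mul]
      exact mul_le_mul_of_nonneg_left (hbc y) (abs_nonneg _)
    refine ⟨hint, ?_⟩
    calc |∫ y, W y * b y| ≤ ∫ y, |W y * b y| :=
          norm_integral_le_integral_norm (fun y => W y * b y)
    _ ≤ ∫ y, |W y| * c := by
          refine integral_mono hint.abs (hW.abs.mul_const c) (fun y => ?_)
          rw [abs_mul]
          exact mul_le_mul_of_nonneg_left (hbc y) (abs_nonneg _)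
    _ = (∫ y, |W y|) * c := integral_mul_const _ _
  -- the nonlocal operator Φ
  obtain ⟨Φ, hΦ_apply, hΦ_bound, hΦ_lip⟩ :
      ∃ Φ : BoundedContinuousFunction (Fin m → ℝ) ℝ → BoundedContinuousFunction (Fin m → ℝ) ℝ,
        (∀ (v : BoundedContinuousFunction (Fin m → ℝ) ℝ) (x : Fin m → ℝ),
            Φ v x = ∫ y, w x y * ((1 + γ * g (v x - v y)) * f (v y))) ∧
        (∀ v : BoundedContinuousFunction (Fin m → ℝ) ℝ, ‖Φ v‖ ≤ A) ∧
        (∀ v v' : BoundedContinuousFunction (Fin m → ℝ) ℝ, ‖Φ v - Φ v'‖ ≤ LΦ * ‖v - v'‖) := by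
    set b : BoundedContinuousFunction (Fin m → ℝ) ℝ → (Fin m → ℝ) → (Fin m → ℝ) → ℝ :=
      fun v x y => (1 + γ * g (v x - v y)) * f (v y) with hb
    have hb_cont : ∀ v x, Continuous (fun y => b v x y) := by
      intro v x
      exact ((continuous_const.add (continuous_const.mul
        (hgc.comp (continuous_const.sub v.continuous)))).mul (hfc.comp v.continuous))
    have hb_bdd : ∀ v x y, |b v x y| ≤ 1 + γ := by
      intro v x y
      have h1 := hg_range (v x - v y)
      have h2 := hf_range (v y)
      rw [abs_mul]
      have e1 : |1 + γ * g (v x - v y)| ≤ 1 + γ := by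
        rw [abs_of_nonneg (by nlinarith)]; nlinarith
      have e2 : |f (v y)| ≤ 1 := by rw [abs_of_nonneg h2.1]; exact h2.2
      nlinarith [abs_nonneg (1 + γ * g (v x - v y)), abs_nonneg (f (v y))]
    have h1γ : (0:ℝ) ≤ 1 + γ := by linarith
    set p : BoundedContinuousFunction (Fin m → ℝ) ℝ → (Fin m → ℝ) → ℝ :=
      fun v x => ∫ y, w x y * b v x y with hp
    have hp_bdd : ∀ v x, |p v x| ≤ A := by
      intro v x
      have := (hWb (w x) (hw_int x) (b v x) (hb_cont v x) (1 + γ) h1γ (hb_bdd v x)).2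
      calc |p v x| ≤ (∫ y, |w x y|) * (1 + γ) := this
      _ ≤ Cw * (1 + γ) := mul_le_mul_of_nonneg_right (hw_L1 x) h1γ
    -- difference in x estimate
    have hp_diff : ∀ v x x', |p v x - p v x'| ≤
        (1 + γ) * (Kw * ‖x - x'‖) + Cw * (γ * Bg * |v x - v x'|) := by
      intro v x x'
      have hI1 := hWb (fun y => w x y - w x' y) ((hw_int x).sub (hw_int x'))
        (b v x) (hb_cont v x) (1 + γ) h1γ (hb_bdd v x)
      have hd_cont : Continuous (fun y => b v x y - b v x' y) :=
        (hb_cont v x).sub (hb_cont v x')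
      have hd_bdd : ∀ y, |b v x y - b v x' y| ≤ γ * Bg * |v x - v x'| := by
        intro y
        have e1 : b v x y - b v x' y = γ * (g (v x - v y) - g (v x' - v y)) * f (v y) := by
          simp only [hb]; ring
        rw [e1, abs_mul, abs_mul, abs_of_nonneg hγ]
        have e2 : |g (v x - v y) - g (v x' - v y)| ≤ Bg * |v x - v x'| := by
          have := hgL (v x - v y) (v x' - v y)
          have e3 : |v x - v y - (v x' - v y)| = |v x - v x'| := by ring_nf
          rw [e3] at this; exact this
        have e4 : |f (v y)| ≤ 1 := by
          rw [abs_of_nonneg (hf_range _).1]; exact (hf_range _).2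
        calc γ * |g (v x - v y) - g (v x' - v y)| * |f (v y)|
            ≤ γ * (Bg * |v x - v x'|) * 1 := by
              apply mul_le_mul (mul_le_mul_of_nonneg_left e2 hγ) e4 (abs_nonneg _)
              positivity
        _ = γ * Bg * |v x - v x'| := by ring
      have hI2 := hWb (w x') (hw_int x') (fun y => b v x y - b v x' y) hd_cont
        (γ * Bg * |v x - v x'|) (by positivity) hd_bdd
      have hsplit : p v x - p v x' =
          (∫ y, (w x y - w x' y) * b v x y) + ∫ y, w x' y * (b v x y - b v x' y) := by
        rw [hp]
        rw [← integral_sub (hWb (w x) (hw_int x) (b v x) (hb_cont v x) (1 + γ) h1γ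
            (hb_bdd v x)).1 (hWb (w x') (hw_int x') (b v x') (hb_cont v x') (1 + γ) h1γ
            (hb_bdd v x')).1,
          ← integral_add hI1.1 hI2.1]
        apply integral_congr_ae
        filter_upwards with y
        ring
      rw [hsplit]
      calc |(∫ y, (w x y - w x' y) * b v x y) + ∫ y, w x' y * (b v x y - b v x' y)|
          ≤ |∫ y, (w x y - w x' y) * b v x y| + |∫ y, w x' y * (b v x y - b v x' y)| :=
            abs_add_le _ _
      _ ≤ (∫ y, |w x y - w x' y|) * (1 + γ) +
            (∫ y, |w x' y|) * (γ * Bg * |v x - v x'|) := add_le_add hI1.2 hI2.2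
      _ ≤ (Kw * ‖x - x'‖) * (1 + γ) + Cw * (γ * Bg * |v x - v x'|) := by
            refine add_le_add (mul_le_mul_of_nonneg_right (hw_lip x x') h1γ)
              (mul_le_mul_of_nonneg_right (hw_L1 x') (by positivity))
      _ = (1 + γ) * (Kw * ‖x - x'‖) + Cw * (γ * Bg * |v x - v x'|) := by ring
    have hp_cont : ∀ v, Continuous (p v) := by
      intro v
      rw [continuous_iff_continuousAt]
      intro x₀
      rw [ContinuousAt, tendsto_iff_dist_tendsto_zero]
      have hE : Filter.Tendsto
          (fun x => (1 + γ) * (Kw * ‖x - x₀‖) + Cw * (γ * Bg * |v x - v x₀|))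
          (nhds x₀) (nhds 0) := by
        have hEc : Continuous
            (fun x => (1 + γ) * (Kw * ‖x - x₀‖) + Cw * (γ * Bg * |v x - v x₀|)) := by
          apply Continuous.add
          · exact continuous_const.mul (continuous_const.mul
              ((continuous_id.sub continuous_const).norm))
          · exact continuous_const.mul (continuous_const.mul
              ((v.continuous.sub continuous_const).abs))
        have h2 := hEc.tendsto x₀
        simp only [sub_self, norm_zero, abs_zero, mul_zero, add_zero, zero_add] at h2
        exact h2
      apply squeeze_zero (fun x => dist_nonneg) (fun x => ?_) hE
      rw [Real.dist_eq]
      exact hp_diff v x x₀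
    refine ⟨fun v => BoundedContinuousFunction.ofNormedAddCommGroup (p v) (hp_cont v) A
      (fun x => by rw [Real.norm_eq_abs]; exact hp_bdd v x), ?_, ?_, ?_⟩
    · intro v x; rfl
    · intro v
      exact BoundedContinuousFunction.norm_ofNormedAddCommGroup_le _ hA0.le _
    · intro v v'
      rw [BoundedContinuousFunction.norm_le (by positivity)]
      intro x
      rw [Real.norm_eq_abs]
      have hxx : (BoundedContinuousFunction.ofNormedAddCommGroup (p v) (hp_cont v) A
            (fun x => by rw [Real.norm_eq_abs]; exact hp_bdd v x) -
          BoundedContinuousFunction.ofNormedAddCommGroup (p v') (hp_cont v') A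
            (fun x => by rw [Real.norm_eq_abs]; exact hp_bdd v' x)) x = p v x - p v' x := rfl
      rw [hxx]
      -- pointwise Lipschitz estimate
      have hd_cont : Continuous (fun y => b v x y - b v' x y) :=
        (hb_cont v x).sub (hb_cont v' x)
      have hvv : ∀ z, |v z - v' z| ≤ ‖v - v'‖ := by
        intro z
        have := BoundedContinuousFunction.norm_coe_le_norm (v - v') z
        rwa [BoundedContinuousFunction.sub_apply, Real.norm_eq_abs] at this
      have hd_bdd : ∀ y, |b v x y - b v' x y| ≤
          ((1 + γ) * Bf + 2 * γ * Bg) * ‖v - v'‖ := by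
        intro y
        have e1 : b v x y - b v' x y =
            (1 + γ * g (v x - v y)) * (f (v y) - f (v' y)) +
            γ * (g (v x - v y) - g (v' x - v' y)) * f (v' y) := by
          simp only [hb]; ring
        have e2 : |1 + γ * g (v x - v y)| ≤ 1 + γ := by
          have := hg_range (v x - v y)
          rw [abs_of_nonneg (by nlinarith)]; nlinarith
        have e3 : |f (v y) - f (v' y)| ≤ Bf * ‖v - v'‖ := by
          calc |f (v y) - f (v' y)| ≤ Bf * |v y - v' y| := hfL _ _
          _ ≤ Bf * ‖v - v'‖ := mul_le_mul_of_nonneg_left (hvv y) hBf0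
        have e4 : |g (v x - v y) - g (v' x - v' y)| ≤ 2 * Bg * ‖v - v'‖ := by
          calc |g (v x - v y) - g (v' x - v' y)| ≤ Bg * |v x - v y - (v' x - v' y)| :=
                hgL _ _
          _ ≤ Bg * (|v x - v' x| + |v y - v' y|) := by
                apply mul_le_mul_of_nonneg_left _ hBg0
                calc |v x - v y - (v' x - v' y)| = |(v x - v' x) - (v y - v' y)| := by
                      ring_nf
                _ ≤ |v x - v' x| + |v y - v' y| := abs_sub _ _
          _ ≤ Bg * (‖v - v'‖ + ‖v - v'‖) := by
                apply mul_le_mul_of_nonneg_left (add_le_add (hvv x) (hvv y)) hBg0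
          _ = 2 * Bg * ‖v - v'‖ := by ring
        have e5 : |f (v' y)| ≤ 1 := by
          rw [abs_of_nonneg (hf_range _).1]; exact (hf_range _).2
        calc |b v x y - b v' x y|
            ≤ |(1 + γ * g (v x - v y)) * (f (v y) - f (v' y))| +
              |γ * (g (v x - v y) - g (v' x - v' y)) * f (v' y)| := by
              rw [e1]; exact abs_add_le _ _
        _ ≤ (1 + γ) * (Bf * ‖v - v'‖) + γ * (2 * Bg * ‖v - v'‖) * 1 := by
              apply add_le_add
              · rw [abs_mul]
                exact mul_le_mul e2 e3 (abs_nonneg _) h1γ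
              · rw [abs_mul, abs_mul, abs_of_nonneg hγ]
                apply mul_le_mul (mul_le_mul_of_nonneg_left e4 hγ) e5 (abs_nonneg _)
                positivity
        _ = ((1 + γ) * Bf + 2 * γ * Bg) * ‖v - v'‖ := by ring
      have hI := hWb (w x) (hw_int x) (fun y => b v x y - b v' x y) hd_cont
        (((1 + γ) * Bf + 2 * γ * Bg) * ‖v - v'‖) (by positivity) hd_bdd
      have hsplit : p v x - p v' x = ∫ y, w x y * (b v x y - b v' x y) := by
        rw [hp]
        rw [← integral_sub (hWb (w x) (hw_int x) (b v x) (hb_cont v x) (1 + γ) h1γ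
            (hb_bdd v x)).1 (hWb (w x) (hw_int x) (b v' x) (hb_cont v' x) (1 + γ) h1γ
            (hb_bdd v' x)).1]
        apply integral_congr_ae
        filter_upwards with y
        ring
      rw [hsplit]
      calc |∫ y, w x y * (b v x y - b v' x y)|
          ≤ (∫ y, |w x y|) * (((1 + γ) * Bf + 2 * γ * Bg) * ‖v - v'‖) := hI.2
      _ ≤ Cw * (((1 + γ) * Bf + 2 * γ * Bg) * ‖v - v'‖) :=
            mul_le_mul_of_nonneg_right (hw_L1 x) (by positivity)
      _ = LΦ * ‖v - v'‖ := by rw [hLΦ]; ring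
  -- the vector field
  set F : BoundedContinuousFunction (Fin m → ℝ) ℝ → BoundedContinuousFunction (Fin m → ℝ) ℝ := fun v => -v + Φ v with hF
  have hF_norm : ∀ v, ‖F v‖ ≤ ‖v‖ + A := by
    intro v
    calc ‖F v‖ ≤ ‖-v‖ + ‖Φ v‖ := norm_add_le _ _
    _ ≤ ‖v‖ + A := by rw [norm_neg]; exact add_le_add le_rfl (hΦ_bound v)
  have hF_lip : LipschitzWith (1 + LΦ).toNNReal F := by
    apply LipschitzWith.of_dist_le_mul
    intro v v'
    rw [dist_eq_norm, dist_eq_norm]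
    have h1 : F v - F v' = -(v - v') + (Φ v - Φ v') := by simp [hF]; abel
    rw [h1]
    calc ‖-(v - v') + (Φ v - Φ v')‖ ≤ ‖-(v - v')‖ + ‖Φ v - Φ v'‖ := norm_add_le _ _
    _ ≤ ‖v - v'‖ + LΦ * ‖v - v'‖ := by rw [norm_neg]; exact add_le_add le_rfl (hΦ_lip v v')
    _ = (1 + LΦ) * ‖v - v'‖ := by ring
    _ = ((1 + LΦ).toNNReal : ℝ) * ‖v - v'‖ := by
        rw [Real.coe_toNNReal _ (by positivity)]
  -- local solvability with a priori bounds
  have key : ∀ (a : ℝ), 0 ≤ a → ∀ (x₀ : BoundedContinuousFunction (Fin m → ℝ) ℝ), ‖x₀‖ ≤ R₀ →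
      ∃ uu : ℝ → BoundedContinuousFunction (Fin m → ℝ) ℝ, uu a = x₀ ∧
        (∀ t ∈ Icc a (a + h), HasDerivWithinAt uu (F (uu t)) (Icc a (a + h)) t) ∧
        (∀ t ∈ Icc a (a + h), ‖uu t‖ ≤ M) ∧ ‖uu (a + h)‖ ≤ R₀ := by
    intro a ha x₀ hx₀
    have hPL : IsPicardLindelof (fun _ x => F x) (tmin := a) (tmax := a + h)
        ⟨a, ⟨le_rfl, by linarith [hhpos.le]⟩⟩ x₀ 1 0 CC.toNNReal (1 + LΦ).toNNReal := by
      refine ⟨?_, ?_, ?_, ?_⟩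
      · intro t _
        exact hF_lip.lipschitzOnWith
      · intro x _
        exact continuousOn_const
      · intro t _ x hx
        have hd : ‖x - x₀‖ ≤ 1 := by
          have := Metric.mem_closedBall.mp hx
          rwa [dist_eq_norm] at this
        have hxn : ‖x‖ ≤ ‖x₀‖ + 1 := by
          have := norm_sub_norm_le x x₀
          linarith
        calc ‖F x‖ ≤ ‖x‖ + A := hF_norm x
        _ ≤ (‖x₀‖ + 1) + A := by linarith
        _ ≤ CC := by rw [hCC]; linarith
        _ ≤ CC.toNNReal := Real.le_coe_toNNReal _
      · have hmax : max (a + h - a) (a - a) = h := by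
          rw [show a + h - a = h by ring, sub_self, max_eq_left hhpos.le]
        show ((CC.toNNReal : ℝ)) * max (a + h - a) (a - a) ≤ ((1:NNReal):ℝ) - ((0:NNReal):ℝ)
        rw [Real.coe_toNNReal _ hCC0.le, hmax]
        simpa using hhC
    obtain ⟨uu, huu0, huud⟩ := hPL.exists_eq_forall_mem_Icc_hasDerivWithinAt₀
    replace huu0 : uu a = x₀ := huu0
    -- Gronwall estimate via the integrating factor `exp t • uu t`
    have hGd : ∀ t ∈ Icc a (a + h),
        HasDerivWithinAt (fun s => Real.exp s • uu s) (Real.exp t • Φ (uu t))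
          (Icc a (a + h)) t := by
      intro t ht
      have hD := ((Real.hasDerivAt_exp t).hasDerivWithinAt).smul (huud t ht)
      have heq : Real.exp t • F (uu t) + Real.exp t • uu t = Real.exp t • Φ (uu t) := by
        rw [hF]
        show Real.exp t • (-(uu t) + Φ (uu t)) + Real.exp t • uu t = _
        rw [smul_add, smul_neg]
        abel
      rw [← heq]
      exact hD
    have hGB : ∀ t ∈ Icc a (a + h),
        Real.exp t * ‖uu t‖ ≤ Real.exp a * R₀ + Real.exp (a + h) * A * (t - a) := by
      have hGc : ContinuousOn (fun s => Real.exp s • uu s) (Icc a (a + h)) :=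
        fun t ht => (hGd t ht).continuousWithinAt
      have hGd' : ∀ t ∈ Ico a (a + h),
          HasDerivWithinAt (fun s => Real.exp s • uu s) (Real.exp t • Φ (uu t)) (Ici t) t :=
        fun t ht => (hGd t (Ico_subset_Icc_self ht)).mono_of_mem_nhdsWithin
          (Icc_mem_nhdsGE_of_mem ht)
      have hGa : ‖Real.exp a • uu a‖ ≤ Real.exp a * R₀ := by
        have hn := norm_smul (Real.exp a) (uu a)
        rw [Real.norm_eq_abs, abs_of_pos (Real.exp_pos a)] at hn
        refine hn.trans_le ?_
        rw [huu0]
        exact mul_le_mul_of_nonneg_left hx₀ (Real.exp_pos a).le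
      have hGbd : ∀ t ∈ Ico a (a + h),
          ‖Real.exp t • Φ (uu t)‖ ≤ 0 * ‖Real.exp t • uu t‖ + Real.exp (a + h) * A := by
        intro t ht
        have hn := norm_smul (Real.exp t) (Φ (uu t))
        rw [Real.norm_eq_abs, abs_of_pos (Real.exp_pos t)] at hn
        rw [zero_mul, zero_add]
        refine hn.trans_le ?_
        calc Real.exp t * ‖Φ (uu t)‖ ≤ Real.exp t * A :=
              mul_le_mul_of_nonneg_left (hΦ_bound (uu t)) (Real.exp_pos t).le
        _ ≤ Real.exp (a + h) * A :=
              mul_le_mul_of_nonneg_right (Real.exp_le_exp.2 ht.2.le) hA0.le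
      intro t ht
      have := norm_le_gronwallBound_of_norm_deriv_right_le hGc hGd' hGa hGbd t ht
      rw [gronwallBound_K0] at this
      have hnorm : ‖Real.exp t • uu t‖ = Real.exp t * ‖uu t‖ := by
        have hn := norm_smul (Real.exp t) (uu t)
        rw [Real.norm_eq_abs, abs_of_pos (Real.exp_pos t)] at hn
        exact hn
      rw [hnorm] at this
      exact this
    have hexp2 : Real.exp h ≤ 2 := by
      calc Real.exp h ≤ Real.exp (Real.log 2) := Real.exp_le_exp.2 hhlog
      _ = 2 := Real.exp_log (by norm_num)
    refine ⟨uu, huu0, huud, ?_, ?_⟩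
    · -- global bound M on the interval
      intro t ht
      have hG := hGB t ht
      have e1 : Real.exp a ≤ Real.exp t := Real.exp_le_exp.2 ht.1
      have e2 : Real.exp (a + h) ≤ 2 * Real.exp t := by
        have : Real.exp (a + h) = Real.exp (a + h - t) * Real.exp t := by
          rw [← Real.exp_add]; ring_nf
        rw [this]
        have : Real.exp (a + h - t) ≤ 2 := by
          calc Real.exp (a + h - t) ≤ Real.exp h := Real.exp_le_exp.2 (by linarith [ht.1])
          _ ≤ 2 := hexp2
        nlinarith [Real.exp_pos t]
      have e3 : Real.exp (a + h) * A * (t - a) ≤ 2 * Real.exp t * A := by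
        calc Real.exp (a + h) * A * (t - a) ≤ Real.exp (a + h) * A * 1 := by
              apply mul_le_mul_of_nonneg_left _ (by positivity)
              linarith [ht.2, hh1]
        _ = Real.exp (a + h) * A := by ring
        _ ≤ 2 * Real.exp t * A := mul_le_mul_of_nonneg_right e2 hA0.le
      have e4 : Real.exp t * ‖uu t‖ ≤ Real.exp t * M := by
        rw [hM]
        calc Real.exp t * ‖uu t‖ ≤ Real.exp a * R₀ + Real.exp (a + h) * A * (t - a) := hG
        _ ≤ Real.exp t * R₀ + 2 * Real.exp t * A := by
              refine add_le_add (mul_le_mul_of_nonneg_right e1 hR₀0.le) e3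
        _ = Real.exp t * (R₀ + 2 * A) := by ring
      exact le_of_mul_le_mul_left e4 (Real.exp_pos t)
    · -- endpoint bound R₀
      have hG := hGB (a + h) ⟨by linarith [hhpos.le], le_rfl⟩
      have e0 : Real.exp (a + h) = Real.exp a * Real.exp h := by rw [← Real.exp_add]
      have e1 : h ≤ Real.exp h - 1 := by linarith [Real.add_one_le_exp h]
      have e2 : A * h * Real.exp h ≤ R₀ * (Real.exp h - 1) := by
        calc A * h * Real.exp h ≤ A * h * 2 :=
              mul_le_mul_of_nonneg_left hexp2 (by positivity)
        _ = 2 * A * h := by ring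
        _ ≤ R₀ * h := mul_le_mul_of_nonneg_right h2A hhpos.le
        _ ≤ R₀ * (Real.exp h - 1) := mul_le_mul_of_nonneg_left e1 hR₀0.le
      have e4 : Real.exp (a + h) * ‖uu (a + h)‖ ≤ Real.exp (a + h) * R₀ := by
        calc Real.exp (a + h) * ‖uu (a + h)‖
            ≤ Real.exp a * R₀ + Real.exp (a + h) * A * (a + h - a) := hG
        _ = Real.exp a * R₀ + Real.exp a * Real.exp h * A * h := by rw [e0]; ring
        _ ≤ Real.exp a * R₀ + Real.exp a * (R₀ * (Real.exp h - 1)) := by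
              have := mul_le_mul_of_nonneg_left e2 (Real.exp_pos a).le
              nlinarith [Real.exp_pos a]
        _ = Real.exp (a + h) * R₀ := by rw [e0]; ring
      exact le_of_mul_le_mul_left e4 (Real.exp_pos (a + h))
  choose sol hsol₁ hsol₂ hsol₃ hsol₄ using key
  -- the chain of nodes
  have hnode : ∀ k : ℕ, 0 ≤ (k : ℝ) * h := fun k => by positivity
  let vals : ℕ → {x : BoundedContinuousFunction (Fin m → ℝ) ℝ // ‖x‖ ≤ R₀} := fun n =>
    Nat.rec ⟨u₀, by rw [hR₀]; nlinarith [norm_nonneg u₀]⟩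
      (fun k p => ⟨sol ((k : ℝ) * h) (hnode k) p.1 p.2 ((k : ℝ) * h + h),
        hsol₄ ((k : ℝ) * h) (hnode k) p.1 p.2⟩) n
  let piece : ℕ → ℝ → BoundedContinuousFunction (Fin m → ℝ) ℝ := fun k => sol ((k : ℝ) * h) (hnode k) (vals k).1 (vals k).2
  have hpiece_start : ∀ k, piece k ((k : ℝ) * h) = (vals k).1 := fun k =>
    hsol₁ ((k : ℝ) * h) (hnode k) (vals k).1 (vals k).2
  have hpiece_end : ∀ k, piece k ((k : ℝ) * h + h) = (vals (k + 1)).1 := fun k => rfl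
  have hstep : ∀ k : ℕ, ((k : ℝ) + 1) * h = (k : ℝ) * h + h := fun k => by ring
  -- the global solution as a curve in X
  set U : ℝ → BoundedContinuousFunction (Fin m → ℝ) ℝ := fun t => piece ⌊t / h⌋₊ t with hU
  have hfloor : ∀ (k : ℕ) (t : ℝ), (k : ℝ) * h ≤ t → t < (k : ℝ) * h + h → ⌊t / h⌋₊ = k := by
    intro k t h1 h2
    have ht0 : 0 ≤ t := le_trans (hnode k) h1
    rw [Nat.floor_eq_iff (div_nonneg ht0 hhpos.le)]
    constructor
    · rw [le_div_iff₀ hhpos]; linarith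
    · rw [div_lt_iff₀ hhpos]; push_cast; linarith
  have hUagree : ∀ (k : ℕ) (t : ℝ), (k : ℝ) * h ≤ t → t < (k : ℝ) * h + h →
      U t = piece k t := by
    intro k t h1 h2
    show piece ⌊t / h⌋₊ t = piece k t
    rw [hfloor k t h1 h2]
  have hmem : ∀ t : ℝ, 0 ≤ t → (⌊t / h⌋₊ : ℝ) * h ≤ t ∧ t < (⌊t / h⌋₊ : ℝ) * h + h := by
    intro t ht
    have h1 := Nat.floor_le (show 0 ≤ t / h by positivity)
    have h2 := Nat.lt_floor_add_one (t / h)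
    rw [le_div_iff₀ hhpos] at h1
    rw [div_lt_iff₀ hhpos] at h2
    exact ⟨h1, by linarith⟩
  have hU0 : U 0 = u₀ := by
    have := hUagree 0 0 (by simp) (by simpa using hhpos)
    rw [this]
    have := hpiece_start 0
    simp at this; exact this
  have hUd : ∀ t : ℝ, 0 ≤ t → HasDerivWithinAt U (F (U t)) (Ici 0) t := by
    intro t ht
    obtain ⟨h1, h2⟩ := hmem t ht
    set k := ⌊t / h⌋₊ with hk
    clear_value k
    have hUt : U t = piece k t := hUagree k t h1 h2
    have hder_k : HasDerivWithinAt (piece k) (F (piece k t))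
        (Icc ((k : ℝ) * h) ((k : ℝ) * h + h)) t :=
      hsol₂ _ (hnode k) _ _ t ⟨h1, h2.le⟩
    rcases eq_or_lt_of_le h1 with heq | hlt
    · -- t is a node point `k * h`
      have hr : HasDerivWithinAt U (F (U t)) (Ici t) t := by
        have hmemIci : Icc ((k : ℝ) * h) ((k : ℝ) * h + h) ∈ nhdsWithin t (Ici t) := by
          exact Icc_mem_nhdsGE_of_mem ⟨heq.le, h2⟩
        have hd := hder_k.mono_of_mem_nhdsWithin hmemIci
        rw [← hUt] at hd
        apply hd.congr_of_eventuallyEq _ hUt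
        filter_upwards [Ico_mem_nhdsGE_of_mem
          (show t ∈ Ico t ((k : ℝ) * h + h) from ⟨le_rfl, h2⟩)] with s hs
        exact hUagree k s (heq ▸ hs.1) hs.2
      cases k with
      | zero =>
        have ht0 : t = 0 := by
          simp only [Nat.cast_zero, zero_mul] at heq
          exact heq.symm
        rw [ht0] at hr ⊢
        exact hr
      | succ j =>
        -- left derivative from the previous piece
        have hjt : (j : ℝ) * h + h = t := by
          rw [← heq]; push_cast; ring
        have hjlt : (j : ℝ) * h < t := by
          rw [← hjt]; linarith [hhpos]
        have hder_j : HasDerivWithinAt (piece j) (F (piece j t))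
            (Icc ((j : ℝ) * h) ((j : ℝ) * h + h)) t :=
          hsol₂ _ (hnode j) _ _ t ⟨hjlt.le, hjt.ge⟩
        have hpj_t : piece j t = U t := by
          have e1 : piece j t = (vals (j + 1)).1 := by
            rw [← hjt]
          have e2 : piece (j + 1) t = (vals (j + 1)).1 := by
            have := hpiece_start (j + 1)
            rw [show ((j + 1 : ℕ) : ℝ) * h = t by push_cast; linarith [hjt]] at this
            exact this
          rw [e1, hUt, e2]
        have hl : HasDerivWithinAt U (F (U t)) (Iic t) t := by
          have hmemIic : Icc ((j : ℝ) * h) t ∈ nhdsWithin t (Iic t) :=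
            Icc_mem_nhdsLE_of_mem ⟨hjlt, le_rfl⟩
          have hd := hder_j.mono_of_mem_nhdsWithin (by
            rw [hjt]
            exact hmemIic)
          rw [hpj_t] at hd
          apply hd.congr_of_eventuallyEq _ hpj_t.symm
          filter_upwards [Icc_mem_nhdsLE_of_mem
            (show t ∈ Ioc ((j : ℝ) * h) t from ⟨hjlt, le_rfl⟩)] with s hs
          rcases eq_or_lt_of_le hs.2 with hst | hst
          · rw [hst, hpj_t]
          · exact hUagree j s hs.1 (by rw [hjt]; exact hst)
        have hu := hl.union hr
        rw [Iic_union_Ici] at hu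
        exact hu.mono (subset_univ _)
    · -- t is in the interior of the interval
      have hda : HasDerivAt (piece k) (F (piece k t)) t :=
        hder_k.hasDerivAt (Icc_mem_nhds hlt h2)
      rw [← hUt] at hda
      have hda' : HasDerivAt U (F (U t)) t := by
        apply hda.congr_of_eventuallyEq
        filter_upwards [Ioo_mem_nhds hlt h2] with s hs
        exact hUagree k s hs.1.le hs.2
      exact hda'.hasDerivWithinAt
  have hUcont : ContinuousOn U (Ici 0) := fun t ht => (hUd t ht).continuousWithinAt
  have hUM : ∀ t : ℝ, 0 ≤ t → ‖U t‖ ≤ M := by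
    intro t ht
    obtain ⟨h1, h2⟩ := hmem t ht
    rw [hUagree _ t h1 h2]
    exact hsol₃ _ (hnode _) _ _ t ⟨h1, h2.le⟩
  -- assemble
  refine ⟨fun x t => U t x, ?_, ⟨M, ?_⟩, ?_, ?_⟩
  · have hq : ContinuousOn (fun p : (Fin m → ℝ) × ℝ => ((U p.2 : BoundedContinuousFunction (Fin m → ℝ) ℝ), p.1))
        (univ ×ˢ Ici 0) := by
      apply ContinuousOn.prodMk
      · exact hUcont.comp continuous_snd.continuousOn (fun p hp => hp.2)
      · exact continuous_fst.continuousOn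
    exact continuous_eval.comp_continuousOn hq
  · intro x t ht
    calc |U t x| = ‖U t x‖ := (Real.norm_eq_abs _).symm
    _ ≤ ‖U t‖ := (U t).norm_coe_le_norm x
    _ ≤ M := hUM t ht
  · intro x
    show (U 0) x = u₀ x
    rw [hU0]
  · intro x t ht
    have hD := ((BoundedContinuousFunction.evalCLM ℝ x).hasFDerivAt).comp_hasDerivWithinAt t
      (hUd t ht)
    have heq : (BoundedContinuousFunction.evalCLM ℝ x) (F (U t)) =
        -(U t x) + ∫ y, w x y * (1 + γ * g (U t x - U t y)) * f (U t y) := by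
      have h1 : (BoundedContinuousFunction.evalCLM ℝ x) (F (U t)) =
          -(U t x) + (Φ (U t)) x := rfl
      rw [h1, hΦ_apply (U t) x]
      congr 1
      apply integral_congr_ae
      filter_upwards with y
      ring
    rw [heq] at hD
    exact hD
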